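/- Proximity in the symmetric neighbourhood: let (x, y, s) ∈ N̄(γ, λ) for some λ ≥ 0. Then there exist an optimal solution (x*, y*, s*) of the original QP and problem-dependent constants τ_p, τ_d such that ‖x − x*‖ < τ_p (C₂ √μ_λ max(√μ_λ, 1) + 4‖λ‖ max(‖λ‖, 1)) and ‖s − s*‖ < τ_d (C₂ √μ_λ max(√μ_λ, 1) + 4‖λ‖ max(‖λ‖, 1)), where C₂ = √(n/γ) + n. -/

import Mathlib

open Matrix

/-- Euclidean norm of a finite real vector. -/
noncomputable def eucNorm {ι : Type*} [Fintype ι] (v : ι → ℝ) : ℝ :=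
  Real.sqrt (∑ i, v i ^ 2)

/-- Perturbed duality measure `μ_λ = (x+λ)ᵀ(s+λ)/n`. -/
noncomputable def muLam {n : ℕ} (lam x s : Fin n → ℝ) : ℝ :=
  (∑ i, (x i + lam i) * (s i + lam i)) / n

/-- Membership in the symmetric neighbourhood `N̄(γ, λ)` of the perturbed
central path. -/
def InSymNbhd {m n : ℕ} (H : Matrix (Fin n) (Fin n) ℝ)
    (A : Matrix (Fin m) (Fin n) ℝ) (b : Fin m → ℝ) (c : Fin n → ℝ)
    (γ : ℝ) (lam x s : Fin n → ℝ) (y : Fin m → ℝ) : Prop :=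
  A.mulVec x = b ∧ Aᵀ.mulVec y + s - H.mulVec x = c ∧
  (∀ i, 0 < x i + lam i) ∧ (∀ i, 0 < s i + lam i) ∧
  ∀ i, γ * muLam lam x s ≤ (x i + lam i) * (s i + lam i) ∧
    (x i + lam i) * (s i + lam i) ≤ muLam lam x s / γ

/-- `r(x,s) = ‖min(x,s)‖` (componentwise minimum). -/
noncomputable def rRes {n : ℕ} (x s : Fin n → ℝ) : ℝ :=
  eucNorm (fun i => min (x i) (s i))

/-- `w(x,s) = ‖(−x, −s, xᵀs)₊‖` (componentwise positive part). -/
noncomputable def wRes {n : ℕ} (x s : Fin n → ℝ) : ℝ :=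
  Real.sqrt ((∑ i, max (-x i) 0 ^ 2) + (∑ i, max (-s i) 0 ^ 2) + max (x ⬝ᵥ s) 0 ^ 2)

/-- The KKT conditions of the original QP. -/
def KKT {m n : ℕ} (H : Matrix (Fin n) (Fin n) ℝ) (A : Matrix (Fin m) (Fin n) ℝ)
    (b : Fin m → ℝ) (c : Fin n → ℝ)
    (xs : Fin n → ℝ) (ys : Fin m → ℝ) (ss : Fin n → ℝ) : Prop :=
  A.mulVec xs = b ∧ Aᵀ.mulVec ys + ss - H.mulVec xs = c ∧
  (∀ i, xs i * ss i = 0) ∧ 0 ≤ xs ∧ 0 ≤ ss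

/-- Proximity in the symmetric neighbourhood: if `(x, y, s) ∈ N̄(γ, λ)` with
`λ ≥ 0`, and `τ_p, τ_d > 0` are the QP error-bound constants, then there exists
an optimal solution `(x*, y*, s*)` of the original QP such that
`‖x − x*‖ < τ_p (C₂ √μ_λ max(√μ_λ, 1) + 4‖λ‖ max(‖λ‖, 1))` and similarly for
`‖s − s*‖`, where `C₂ = √(n/γ) + n`. -/
lemma sqrt_add_le' {a b : ℝ} (ha : 0 ≤ a) (hb : 0 ≤ b) :
    Real.sqrt (a + b) ≤ Real.sqrt a + Real.sqrt b := by
  have h := Real.sqrt_le_sqrt (show a + b ≤ (Real.sqrt a + Real.sqrt b) ^ 2 by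
    nlinarith [Real.sq_sqrt ha, Real.sq_sqrt hb,
      mul_nonneg (Real.sqrt_nonneg a) (Real.sqrt_nonneg b)])
  rwa [Real.sqrt_sq (by positivity)] at h

set_option maxHeartbeats 1000000 in
theorem proximity_in_symmetric_neighbourhood {m n : ℕ} (hn : 0 < n)
    (H : Matrix (Fin n) (Fin n) ℝ) (A : Matrix (Fin m) (Fin n) ℝ)
    (b : Fin m → ℝ) (c : Fin n → ℝ) (hH : H.PosSemidef)
    (γ : ℝ) (hγ : γ ∈ Set.Ioo (0 : ℝ) 1)
    (lam : Fin n → ℝ) (hlam : 0 ≤ lam)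
    (x : Fin n → ℝ) (y : Fin m → ℝ) (s : Fin n → ℝ)
    (hmem : InSymNbhd H A b c γ lam x s y)
    (τp τd : ℝ) (hτp : 0 < τp) (hτd : 0 < τd)
    (herr : ∀ (x' : Fin n → ℝ) (y' : Fin m → ℝ) (s' : Fin n → ℝ),
      A.mulVec x' = b → Aᵀ.mulVec y' + s' - H.mulVec x' = c →
      ∃ (xs : Fin n → ℝ) (ys : Fin m → ℝ) (ss : Fin n → ℝ),
        KKT H A b c xs ys ss ∧
        eucNorm (x' - xs) ≤ τp * (rRes x' s' + wRes x' s') ∧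
        eucNorm (s' - ss) ≤ τd * (rRes x' s' + wRes x' s')) :
    ∃ (xs : Fin n → ℝ) (ys : Fin m → ℝ) (ss : Fin n → ℝ),
      KKT H A b c xs ys ss ∧
      eucNorm (x - xs) < τp * ((Real.sqrt (n / γ) + n) * Real.sqrt (muLam lam x s)
          * max (Real.sqrt (muLam lam x s)) 1
        + 4 * eucNorm lam * max (eucNorm lam) 1) ∧
      eucNorm (s - ss) < τd * ((Real.sqrt (n / γ) + n) * Real.sqrt (muLam lam x s)
          * max (Real.sqrt (muLam lam x s)) 1
        + 4 * eucNorm lam * max (eucNorm lam) 1) := by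
  
  obtain ⟨hfeas1, hfeas2, hxp, hsp, hbnd⟩ := hmem
  obtain ⟨xs, ys, ss, hK, hx', hs'⟩ := herr x y s hfeas1 hfeas2
  have hnpos : (0:ℝ) < n := Nat.cast_pos.mpr hn
  have hSpos : 0 < ∑ i, (x i + lam i) * (s i + lam i) :=
    Finset.sum_pos (fun i _ => mul_pos (hxp i) (hsp i)) ⟨⟨0, hn⟩, Finset.mem_univ _⟩
  have hμpos : 0 < muLam lam x s := div_pos hSpos hnpos
  have hnμ : (n:ℝ) * muLam lam x s = ∑ i, (x i + lam i) * (s i + lam i) := by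
    unfold muLam; field_simp
  set μ := muLam lam x s with hμdef
  set L2 : ℝ := ∑ i, lam i ^ 2 with hL2
  have hL2nonneg : 0 ≤ L2 := Finset.sum_nonneg fun i _ => sq_nonneg _
  have henl : eucNorm lam = Real.sqrt L2 := rfl
  -- bound on rRes
  have hr : rRes x s ≤ Real.sqrt ((n:ℝ) * μ) + eucNorm lam := by
    have h1 : ∀ i, min (x i) (s i) ^ 2 ≤ (x i + lam i) * (s i + lam i) + lam i ^ 2 := by
      intro i
      have hu := hxp i; have hv := hsp i; have hl := hlam i
      rcases le_total (x i) (s i) with h | h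
      · rw [min_eq_left h]
        nlinarith [mul_nonneg hu.le hl, mul_le_mul_of_nonneg_left
          (add_le_add_right h (lam i)) hu.le]
      · rw [min_eq_right h]
        nlinarith [mul_nonneg hv.le hl, mul_le_mul_of_nonneg_left
          (add_le_add_right h (lam i)) hv.le]
    have h2 : ∑ i, min (x i) (s i) ^ 2 ≤ (n:ℝ) * μ + L2 := by
      rw [hnμ, hL2, ← Finset.sum_add_distrib]
      exact Finset.sum_le_sum fun i _ => h1 i
    calc rRes x s = Real.sqrt (∑ i, min (x i) (s i) ^ 2) := by
          unfold rRes eucNorm; simp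
      _ ≤ Real.sqrt ((n:ℝ) * μ + L2) := Real.sqrt_le_sqrt h2
      _ ≤ Real.sqrt ((n:ℝ) * μ) + Real.sqrt L2 :=
          sqrt_add_le' (by positivity) hL2nonneg
      _ = Real.sqrt ((n:ℝ) * μ) + eucNorm lam := by rw [henl]
  -- bound on wRes
  have hw : wRes x s ≤ 2 * eucNorm lam + ((n:ℝ) * μ + L2) := by
    have hxlb : ∀ i, max (-x i) 0 ≤ lam i := fun i =>
      max_le (by linarith [hxp i]) (hlam i)
    have hslb : ∀ i, max (-s i) 0 ≤ lam i := fun i =>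
      max_le (by linarith [hsp i]) (hlam i)
    have hA : ∑ i, max (-x i) 0 ^ 2 ≤ L2 :=
      Finset.sum_le_sum fun i _ => pow_le_pow_left₀ (le_max_right _ _) (hxlb i) 2
    have hB : ∑ i, max (-s i) 0 ^ 2 ≤ L2 :=
      Finset.sum_le_sum fun i _ => pow_le_pow_left₀ (le_max_right _ _) (hslb i) 2
    have hdot : x ⬝ᵥ s ≤ (n:ℝ) * μ + L2 := by
      rw [hnμ, hL2, ← Finset.sum_add_distrib]
      simp only [dotProduct]
      refine Finset.sum_le_sum fun i _ => ?_
      have h1 := mul_nonneg (hlam i) (hxp i).le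
      have h2 := mul_nonneg (hlam i) (hsp i).le
      nlinarith
    have hCnn : 0 ≤ (n:ℝ) * μ + L2 := by positivity
    have hC : max (x ⬝ᵥ s) 0 ^ 2 ≤ ((n:ℝ) * μ + L2) ^ 2 :=
      pow_le_pow_left₀ (le_max_right _ _) (max_le hdot hCnn) 2
    calc wRes x s ≤ Real.sqrt (L2 + L2 + ((n:ℝ) * μ + L2) ^ 2) :=
          Real.sqrt_le_sqrt (add_le_add (add_le_add hA hB) hC)
      _ ≤ Real.sqrt (L2 + L2) + Real.sqrt (((n:ℝ) * μ + L2) ^ 2) :=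
          sqrt_add_le' (by positivity) (sq_nonneg _)
      _ ≤ (Real.sqrt L2 + Real.sqrt L2) + ((n:ℝ) * μ + L2) := by
          have := sqrt_add_le' hL2nonneg hL2nonneg
          rw [Real.sqrt_sq hCnn]
          linarith
      _ = 2 * eucNorm lam + ((n:ℝ) * μ + L2) := by rw [henl]; ring
  -- the key strict inequality
  have hmain : rRes x s + wRes x s <
      (Real.sqrt (n / γ) + n) * Real.sqrt μ * max (Real.sqrt μ) 1
        + 4 * eucNorm lam * max (eucNorm lam) 1 := by
    set a := Real.sqrt μ with hadef
    set bb := eucNorm lam with hbdef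
    have ha : 0 < a := Real.sqrt_pos.mpr hμpos
    have hb : 0 ≤ bb := Real.sqrt_nonneg _
    have haμ : a ^ 2 = μ := Real.sq_sqrt hμpos.le
    have hbL : bb ^ 2 = L2 := by rw [henl]; exact Real.sq_sqrt hL2nonneg
    have hsqnμ : Real.sqrt ((n:ℝ) * μ) = Real.sqrt (n:ℝ) * a := by
      rw [hadef, Real.sqrt_mul (Nat.cast_nonneg n)]
    have hqp : Real.sqrt (n:ℝ) < Real.sqrt ((n:ℝ) / γ) := by
      apply Real.sqrt_lt_sqrt (Nat.cast_nonneg n)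
      rw [lt_div_iff₀ hγ.1]
      nlinarith [hγ.2]
    have hM1 : (1:ℝ) ≤ max a 1 := le_max_right _ _
    have hMa : a ≤ max a 1 := le_max_left _ _
    have hMb1 : (1:ℝ) ≤ max bb 1 := le_max_right _ _
    have hMbb : bb ≤ max bb 1 := le_max_left _ _
    have hp0 : 0 ≤ Real.sqrt (n:ℝ) := Real.sqrt_nonneg _
    have hq0 : 0 ≤ Real.sqrt ((n:ℝ) / γ) := Real.sqrt_nonneg _
    have hbound : rRes x s + wRes x s ≤
        Real.sqrt (n:ℝ) * a + 3 * bb + ((n:ℝ) * μ + L2) := by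
      rw [← hsqnμ]; linarith
    refine lt_of_le_of_lt hbound ?_
    rw [← haμ, ← hbL]
    nlinarith [mul_pos ha (sub_pos.mpr hqp),
      mul_nonneg (mul_nonneg ha.le hq0) (sub_nonneg.mpr hM1),
      mul_nonneg (mul_nonneg hnpos.le ha.le) (sub_nonneg.mpr hMa),
      mul_nonneg hb (sub_nonneg.mpr hMb1),
      mul_nonneg hb (sub_nonneg.mpr hMbb)]
  exact ⟨xs, ys, ss, hK,
    lt_of_le_of_lt hx' ((mul_lt_mul_iff_right₀ hτp).mpr hmain),
    lt_of_le_of_lt hs' ((mul_lt_mul_iff_right₀ hτd).mpr hmain)⟩
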